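/- Let X and Y be Hilbert spaces, T : X → Y a compact linear operator, and for each n ∈ ℕ let P_n be an orthogonal projection on X and Q_n an orthogonal projection on Y. Set T_n := Q_n T P_n. Then ‖T − T_n‖ → 0 as n → ∞ if and only if P_n x → x for every x in the range of the adjoint T* and Q_n y → y for every y in the range of T. -/

import Mathlib

open Filter Topology

section Aux

variable {E F G : Type*}
  [NormedAddCommGroup E] [InnerProductSpace ℝ E] [CompleteSpace E]
  [NormedAddCommGroup F] [InnerProductSpace ℝ F] [CompleteSpace F]

/-- A self-adjoint idempotent is a contraction pointwise. -/
lemma proj_apply_norm_le (Q : E →L[ℝ] E) (hi : IsIdempotentElem Q) (hs : IsSelfAdjoint Q)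
    (y : E) : ‖Q y‖ ≤ ‖y‖ := by
  have hadj : ContinuousLinearMap.adjoint Q = Q := ContinuousLinearMap.isSelfAdjoint_iff'.mp hs
  have hQQ : Q (Q y) = Q y := by
    conv_rhs => rw [← hi]
    rfl
  have h1 : (inner ℝ (Q y) (Q y) : ℝ) = inner ℝ y (Q y) := by
    calc (inner ℝ (Q y) (Q y) : ℝ)
        = inner ℝ ((ContinuousLinearMap.adjoint Q) y) (Q y) := by rw [hadj]
      _ = inner ℝ y (Q (Q y)) := ContinuousLinearMap.adjoint_inner_left Q (Q y) y
      _ = inner ℝ y (Q y) := by rw [hQQ]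
  have h2 : ‖Q y‖ ^ 2 = (inner ℝ y (Q y) : ℝ) := by
    rw [← h1, real_inner_self_eq_norm_sq]
  have h3 : (inner ℝ y (Q y) : ℝ) ≤ ‖y‖ * ‖Q y‖ := real_inner_le_norm _ _
  nlinarith [norm_nonneg y, norm_nonneg (Q y)]

lemma one_sub_proj_norm_le (Q : E →L[ℝ] E) (hi : IsIdempotentElem Q) (hs : IsSelfAdjoint Q) :
    ‖(1 : E →L[ℝ] E) - Q‖ ≤ 2 := by
  calc ‖(1 : E →L[ℝ] E) - Q‖ ≤ ‖(1 : E →L[ℝ] E)‖ + ‖Q‖ := norm_sub_le _ _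
    _ ≤ 1 + 1 := by
        gcongr
        · rw [ContinuousLinearMap.one_def]; exact ContinuousLinearMap.norm_id_le
        · exact Q.opNorm_le_bound zero_le_one fun y => by
            simpa using proj_apply_norm_le Q hi hs y
    _ = 2 := by norm_num

lemma proj_norm_le (Q : E →L[ℝ] E) (hi : IsIdempotentElem Q) (hs : IsSelfAdjoint Q) :
    ‖Q‖ ≤ 1 :=
  Q.opNorm_le_bound zero_le_one fun y => by
    simpa using proj_apply_norm_le Q hi hs y

/-- Schauder's theorem in a Hilbert space : the adjoint of a compact operator is compact. -/
lemma adjoint_isCompact (T : E →L[ℝ] F) (hT : IsCompactOperator (T : E → F)) :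
    IsCompactOperator ((ContinuousLinearMap.adjoint T : F →L[ℝ] E) : F → E) := by
  set T' : F →L[ℝ] E := ContinuousLinearMap.adjoint T with hT'
  have main : IsCompact (closure ((T' : F →ₗ[ℝ] E) '' Metric.closedBall 0 1)) := by
    refine TotallyBounded.isCompact_of_isClosed ?_ isClosed_closure
    apply TotallyBounded.closure
    rw [Metric.totallyBounded_iff]
    intro ε hε
    set TT : F →L[ℝ] F := T.comp T' with hTT
    have hTTc : IsCompactOperator (TT : F → F) := by
      have := hT.comp_clm T'
      rwa [show (TT : F → F) = (T : E → F) ∘ (T' : F → E) from rfl]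
    obtain ⟨M, hM, hMsub⟩ :=
      hTTc.image_closedBall_subset_compact (𝕜₁ := ℝ) (f := (TT : F →ₗ[ℝ] F)) 1
    have tb : TotallyBounded ((TT : F →ₗ[ℝ] F) '' Metric.closedBall 0 1) :=
      hM.totallyBounded.subset hMsub
    obtain ⟨t, htsub, htfin, htcov⟩ :=
      totallyBounded_iff_subset.mp tb _ (Metric.dist_mem_uniformity (show (0:ℝ) < ε ^ 2 / 4 by positivity))
    have hpre : ∀ c ∈ t, ∃ y, y ∈ Metric.closedBall (0 : F) 1 ∧ TT y = c := by
      intro c hc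
      rcases htsub hc with ⟨y, hy, rfl⟩
      exact ⟨y, hy, rfl⟩
    choose! g hg1 hg2 using hpre
    refine ⟨(fun c => T' (g c)) '' t, htfin.image _, ?_⟩
    rintro _ ⟨y, hy, rfl⟩
    have hyt : TT y ∈ ⋃ c ∈ t, { x | (x, c) ∈ { p : F × F | dist p.1 p.2 < ε ^ 2 / 4 } } :=
      htcov ⟨y, hy, rfl⟩
    rcases Set.mem_iUnion₂.mp hyt with ⟨c, hc, hdist⟩
    refine Set.mem_iUnion₂.mpr ⟨T' (g c), Set.mem_image_of_mem _ hc, ?_⟩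
    -- the key estimate
    set w : F := y - g c with hw
    have hTw : ‖T' w‖ ^ 2 = (inner ℝ w (TT w) : ℝ) := by
      rw [← real_inner_self_eq_norm_sq]
      rw [hT', real_inner_comm, ContinuousLinearMap.adjoint_inner_left]
      rfl
    have hwnorm : ‖w‖ ≤ 2 := by
      have h1 : ‖y‖ ≤ 1 := by simpa [mem_closedBall_zero_iff] using hy
      have h2 : ‖g c‖ ≤ 1 := by simpa [mem_closedBall_zero_iff] using hg1 c hc
      calc ‖w‖ ≤ ‖y‖ + ‖g c‖ := norm_sub_le _ _
        _ ≤ 2 := by linarith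
    have hTTw : ‖TT w‖ < ε ^ 2 / 4 := by
      have : TT w = TT y - c := by rw [hw, map_sub, hg2 c hc]
      rw [this, ← dist_eq_norm]
      exact hdist
    have hineq : ‖T' w‖ ^ 2 < ε ^ 2 / 2 := by
      have h4 : (inner ℝ w (TT w) : ℝ) ≤ ‖w‖ * ‖TT w‖ := real_inner_le_norm _ _
      have h5 : ‖w‖ * ‖TT w‖ ≤ 2 * ‖TT w‖ :=
        mul_le_mul_of_nonneg_right hwnorm (norm_nonneg _)
      nlinarith
    have : ‖T' y - T' (g c)‖ ^ 2 < ε ^ 2 / 2 := by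
      rwa [← map_sub, ← hw]
    rw [Metric.mem_ball, dist_eq_norm]
    show ‖T' y - T' (g c)‖ < ε
    nlinarith [norm_nonneg (T' y - T' (g c))]
  exact (isCompactOperator_iff_isCompact_closure_image_closedBall (T' : F →ₗ[ℝ] E) one_pos).mpr main

/-- If `K` is compact and `S n` is a uniformly bounded sequence of operators tending to zero
pointwise on the range of `K`, then `‖S n ∘ K‖ → 0`. -/
lemma norm_comp_tendsto_zero {Z : Type*} [NormedAddCommGroup Z] [NormedSpace ℝ Z]
    (K : E →L[ℝ] F) (hK : IsCompactOperator (K : E → F)) (S : ℕ → F →L[ℝ] Z) {C : ℝ}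
    (hC0 : 0 ≤ C) (hC : ∀ n, ‖S n‖ ≤ C)
    (h : ∀ y ∈ Set.range K, Tendsto (fun n => S n y) atTop (𝓝 0)) :
    Tendsto (fun n => ‖(S n).comp K‖) atTop (𝓝 0) := by
  rw [Metric.tendsto_atTop]
  intro ε hε
  set δ : ℝ := ε / (2 * (C + 1)) with hδdef
  have hδ : 0 < δ := by positivity
  obtain ⟨M, hM, hMsub⟩ :=
    hK.image_closedBall_subset_compact (𝕜₁ := ℝ) (f := (K : E →ₗ[ℝ] F)) 1
  have tb : TotallyBounded ((K : E →ₗ[ℝ] F) '' Metric.closedBall 0 1) :=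
    hM.totallyBounded.subset hMsub
  obtain ⟨t, htsub, htfin, htcov⟩ :=
    totallyBounded_iff_subset.mp tb _ (Metric.dist_mem_uniformity hδ)
  have hev : ∀ᶠ n in atTop, ∀ y ∈ t, ‖S n y‖ < ε / 2 := by
    rw [Filter.eventually_all_finite htfin]
    intro y hy
    have hy' : y ∈ Set.range K := by
      rcases htsub hy with ⟨x, _, rfl⟩; exact ⟨x, rfl⟩
    have := NormedAddCommGroup.tendsto_nhds_zero.mp (h y hy') (ε / 2) (by positivity)
    exact this
  rcases eventually_atTop.mp hev with ⟨N, hN⟩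
  refine ⟨N, fun n hn => ?_⟩
  have hb : ‖(S n).comp K‖ ≤ C * δ + ε / 2 := by
    apply ContinuousLinearMap.opNorm_le_of_unit_norm (by positivity)
    intro x hx
    have hKx : K x ∈ ⋃ y ∈ t, { z | (z, y) ∈ { p : F × F | dist p.1 p.2 < δ } } :=
      htcov ⟨x, by simpa [mem_closedBall_zero_iff] using hx.le, rfl⟩
    rcases Set.mem_iUnion₂.mp hKx with ⟨y, hy, hdist⟩
    have h1 : ‖S n (K x - y)‖ ≤ C * δ := by
      calc ‖S n (K x - y)‖ ≤ ‖S n‖ * ‖K x - y‖ := (S n).le_opNorm _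
        _ ≤ C * δ := by
            apply mul_le_mul (hC n) _ (norm_nonneg _) hC0
            rw [← dist_eq_norm]; exact hdist.le
    have h2 : ‖S n y‖ ≤ ε / 2 := (hN n hn y hy).le
    calc ‖(S n).comp K x‖ = ‖S n (K x - y) + S n y‖ := by
          rw [map_sub, sub_add_cancel]; rfl
      _ ≤ ‖S n (K x - y)‖ + ‖S n y‖ := norm_add_le _ _
      _ ≤ C * δ + ε / 2 := add_le_add h1 h2
  have hCδ : C * δ < ε / 2 := by
    have he : (C + 1) * δ = ε / 2 := by
      rw [hδdef]; field_simp
    nlinarith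
  rw [Real.dist_eq, sub_zero, abs_of_nonneg (norm_nonneg _)]
  linarith

end Aux

/-- For a compact operator `T` and orthogonal projections `P_n`, `Q_n`,
`‖T − Q_n T P_n‖ → 0` iff `P_n → 1` pointwise on `range T*` and `Q_n → 1`
pointwise on `range T`. -/
theorem stmt_2
    {X Y : Type*} [NormedAddCommGroup X] [InnerProductSpace ℝ X] [CompleteSpace X]
    [NormedAddCommGroup Y] [InnerProductSpace ℝ Y] [CompleteSpace Y]
    (T : X →L[ℝ] Y) (hT : IsCompactOperator (T : X → Y))
    (P : ℕ → X →L[ℝ] X) (Q : ℕ → Y →L[ℝ] Y)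
    (hP_idem : ∀ n, IsIdempotentElem (P n)) (hP_sa : ∀ n, IsSelfAdjoint (P n))
    (hQ_idem : ∀ n, IsIdempotentElem (Q n)) (hQ_sa : ∀ n, IsSelfAdjoint (Q n)) :
    Tendsto (fun n => ‖T - (Q n).comp (T.comp (P n))‖) atTop (𝓝 0) ↔
      ((∀ x ∈ Set.range (ContinuousLinearMap.adjoint T), Tendsto (fun n => P n x) atTop (𝓝 x)) ∧
        (∀ y ∈ Set.range T, Tendsto (fun n => Q n y) atTop (𝓝 y))) := by
  set T' : Y →L[ℝ] X := ContinuousLinearMap.adjoint T with hT'def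
  set D : ℕ → X →L[ℝ] Y := fun n => T - (Q n).comp (T.comp (P n)) with hDdef
  have hPapp : ∀ n w, P n (P n w) = P n w := by
    intro n w
    conv_rhs => rw [← hP_idem n]
    rfl
  have hQapp : ∀ n w, Q n (Q n w) = Q n w := by
    intro n w
    conv_rhs => rw [← hQ_idem n]
    rfl
  constructor
  · intro h
    constructor
    · rintro _ ⟨y, rfl⟩
      rw [tendsto_iff_norm_sub_tendsto_zero]
      have hg : Tendsto (fun n => 2 * ‖D n‖ * ‖y‖) atTop (𝓝 0) := by
        simpa using (h.const_mul 2).mul_const ‖y‖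
      refine squeeze_zero (fun n => norm_nonneg _) (fun n => ?_) hg
      set A : Y →L[ℝ] X := ContinuousLinearMap.adjoint (D n) with hAdef
      have hA : A = T' - (P n).comp (T'.comp (Q n)) := by
        rw [hAdef, hDdef, map_sub, ContinuousLinearMap.adjoint_comp,
          ContinuousLinearMap.adjoint_comp,
          ContinuousLinearMap.isSelfAdjoint_iff'.mp (hP_sa n),
          ContinuousLinearMap.isSelfAdjoint_iff'.mp (hQ_sa n), hT'def]
        rfl
      have key : P n (T' y) - T' y = P n (A y) - A y := by
        rw [hA]
        simp only [ContinuousLinearMap.sub_apply, ContinuousLinearMap.comp_apply, map_sub,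
          hPapp]
        abel
      have hAnorm : ‖A‖ = ‖D n‖ := ContinuousLinearMap.adjoint.norm_map (D n)
      calc ‖P n (T' y) - T' y‖ = ‖P n (A y) - A y‖ := by rw [key]
        _ ≤ ‖P n (A y)‖ + ‖A y‖ := norm_sub_le _ _
        _ ≤ ‖A y‖ + ‖A y‖ := by
            gcongr
            exact proj_apply_norm_le (P n) (hP_idem n) (hP_sa n) _
        _ = 2 * ‖A y‖ := by ring
        _ ≤ 2 * (‖A‖ * ‖y‖) := by
            have := A.le_opNorm y; linarith
        _ = 2 * ‖D n‖ * ‖y‖ := by rw [hAnorm]; ring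
    · rintro _ ⟨x, rfl⟩
      rw [tendsto_iff_norm_sub_tendsto_zero]
      have hg : Tendsto (fun n => 2 * ‖D n‖ * ‖x‖) atTop (𝓝 0) := by
        simpa using (h.const_mul 2).mul_const ‖x‖
      refine squeeze_zero (fun n => norm_nonneg _) (fun n => ?_) hg
      have key : Q n (T x) - T x = Q n (D n x) - D n x := by
        rw [hDdef]
        simp only [ContinuousLinearMap.sub_apply, ContinuousLinearMap.comp_apply, map_sub,
          hQapp]
        abel
      calc ‖Q n (T x) - T x‖ = ‖Q n (D n x) - D n x‖ := by rw [key]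
        _ ≤ ‖Q n (D n x)‖ + ‖D n x‖ := norm_sub_le _ _
        _ ≤ ‖D n x‖ + ‖D n x‖ := by
            gcongr
            exact proj_apply_norm_le (Q n) (hQ_idem n) (hQ_sa n) _
        _ = 2 * ‖D n x‖ := by ring
        _ ≤ 2 * (‖D n‖ * ‖x‖) := by
            have := (D n).le_opNorm x; linarith
        _ = 2 * ‖D n‖ * ‖x‖ := by ring
  · rintro ⟨hP, hQ⟩
    set A : ℕ → X →L[ℝ] Y := fun n => ((1 : Y →L[ℝ] Y) - Q n).comp T with hAdef
    set B : ℕ → Y →L[ℝ] X := fun n => ((1 : X →L[ℝ] X) - P n).comp T' with hBdef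
    have hAt : Tendsto (fun n => ‖A n‖) atTop (𝓝 0) := by
      apply norm_comp_tendsto_zero T hT (fun n => (1 : Y →L[ℝ] Y) - Q n)
        (by norm_num : (0:ℝ) ≤ 2)
        (fun n => one_sub_proj_norm_le (Q n) (hQ_idem n) (hQ_sa n))
      intro y hy
      have := (tendsto_const_nhds (x := y) (f := atTop)).sub (hQ y hy)
      simpa [ContinuousLinearMap.sub_apply] using this
    have hT'c : IsCompactOperator (T' : Y → X) := adjoint_isCompact T hT
    have hBt : Tendsto (fun n => ‖B n‖) atTop (𝓝 0) := by
      apply norm_comp_tendsto_zero T' hT'c (fun n => (1 : X →L[ℝ] X) - P n)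
        (by norm_num : (0:ℝ) ≤ 2)
        (fun n => one_sub_proj_norm_le (P n) (hP_idem n) (hP_sa n))
      intro x hx
      have := (tendsto_const_nhds (x := x) (f := atTop)).sub (hP x hx)
      simpa [ContinuousLinearMap.sub_apply] using this
    refine squeeze_zero (fun n => norm_nonneg _) (fun n => ?_)
      (by simpa using hAt.add hBt)
    -- ‖T - Qₙ T Pₙ‖ ≤ ‖A n‖ + ‖B n‖
    set Cn : X →L[ℝ] Y := (Q n).comp (T.comp ((1 : X →L[ℝ] X) - P n)) with hCndef
    have hsplit : T - (Q n).comp (T.comp (P n)) = A n + Cn := by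
      ext x
      simp only [hAdef, hCndef, ContinuousLinearMap.sub_apply, ContinuousLinearMap.add_apply,
        ContinuousLinearMap.comp_apply, ContinuousLinearMap.one_apply, map_sub]
      abel
    have hadjC : ContinuousLinearMap.adjoint Cn = (B n).comp (Q n) := by
      rw [hCndef, ContinuousLinearMap.adjoint_comp, ContinuousLinearMap.adjoint_comp,
        ContinuousLinearMap.isSelfAdjoint_iff'.mp (hQ_sa n), hBdef]
      congr 1
      rw [map_sub, ContinuousLinearMap.isSelfAdjoint_iff'.mp (hP_sa n),
        ContinuousLinearMap.one_def, ContinuousLinearMap.adjoint_id, hT'def]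
    have hCnorm : ‖Cn‖ ≤ ‖B n‖ := by
      have h1 : ‖Cn‖ = ‖(B n).comp (Q n)‖ := by
        rw [← hadjC]
        exact (ContinuousLinearMap.adjoint.norm_map Cn).symm
      calc ‖Cn‖ = ‖(B n).comp (Q n)‖ := h1
        _ ≤ ‖B n‖ * ‖Q n‖ := ContinuousLinearMap.opNorm_comp_le _ _
        _ ≤ ‖B n‖ * 1 :=
            mul_le_mul_of_nonneg_left (proj_norm_le (Q n) (hQ_idem n) (hQ_sa n)) (norm_nonneg _)
        _ = ‖B n‖ := mul_one _
    calc ‖T - (Q n).comp (T.comp (P n))‖ = ‖A n + Cn‖ := by rw [hsplit]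
      _ ≤ ‖A n‖ + ‖Cn‖ := norm_add_le _ _
      _ ≤ ‖A n‖ + ‖B n‖ := by linarith
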